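/- Let $h$ be a bounded harmonic function on a bounded open set $V \subset \mathbb{R}^2$ such that $\limsup_{z \to y} |h(z)| \le C$ for every $y \in \partial V \setminus \{y_1, \dots, y_n\}$, where $y_1, \dots, y_n$ are finitely many boundary points. Then $|h| \le C$ on all of $V$. -/

import Mathlib

open Filter Set Metric

/-- A real-valued function on the complex plane is harmonic on `U` if it is `C²` there and
its Laplacian (sum of the two pure second directional derivatives) vanishes on `U`. -/
def HarmonicOnD (h : ℂ → ℝ) (U : Set ℂ) : Prop :=
  ContDiffOn ℝ 2 h U ∧ ∀ z ∈ U,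
    fderiv ℝ (fun w => fderiv ℝ h w 1) z 1 +
      fderiv ℝ (fun w => fderiv ℝ h w Complex.I) z Complex.I = 0

noncomputable section LindelofAux

/-- squared modulus, written concretely -/
def QSq (u : ℂ) : ℝ := u.re * u.re + u.im * u.im

/-- derivative of `QSq` -/
def NS (u : ℂ) : ℂ →L[ℝ] ℝ := (2 * u.re) • Complex.reCLM + (2 * u.im) • Complex.imCLM

/-- derivative of `log (QSq (· - y))` -/
def BarDer (y z : ℂ) : ℂ →L[ℝ] ℝ := (QSq (z - y))⁻¹ • NS (z - y)

lemma QSq_eq (u : ℂ) : QSq u = Complex.normSq u := (Complex.normSq_apply u).symm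

lemma QSq_eq_norm (u : ℂ) : QSq u = ‖u‖ ^ 2 := by
  rw [QSq_eq, ← Complex.sq_norm]

lemma QSq_pos {u : ℂ} (h : u ≠ 0) : 0 < QSq u := by
  rw [QSq_eq]; exact Complex.normSq_pos.2 h

lemma QSq_nonneg (u : ℂ) : 0 ≤ QSq u := by
  rw [QSq_eq]; exact Complex.normSq_nonneg u

lemma NS_apply (u v : ℂ) : NS u v = 2 * u.re * v.re + 2 * u.im * v.im := by
  simp [NS]; try ring

lemma GL_apply (y z v : ℂ) :
    BarDer y z v = (QSq (z - y))⁻¹ * (2 * (z - y).re * v.re + 2 * (z - y).im * v.im) := by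
  simp [BarDer, NS_apply]

lemma hasFDerivAt_QSq (z : ℂ) : HasFDerivAt QSq (NS z) z := by
  have h1 := ((Complex.reCLM.hasFDerivAt (x := z)).mul (Complex.reCLM.hasFDerivAt (x := z))).add
    ((Complex.imCLM.hasFDerivAt (x := z)).mul (Complex.imCLM.hasFDerivAt (x := z)))
  have h2 : QSq = fun w : ℂ => Complex.reCLM w * Complex.reCLM w +
      Complex.imCLM w * Complex.imCLM w := by
    funext w; simp [QSq]
  rw [h2]
  refine h1.congr_fderiv ?_
  ext v
  simp [NS]
  ring

lemma hasFDerivAt_QSq_sub (y z : ℂ) :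
    HasFDerivAt (fun w => QSq (w - y)) (NS (z - y)) z := by
  have h := (hasFDerivAt_QSq (z - y)).comp z ((hasFDerivAt_id z).sub_const y)
  simpa [Function.comp_def] using h

lemma hasFDerivAt_logQ (y z : ℂ) (hz : z ≠ y) :
    HasFDerivAt (fun w => Real.log (QSq (w - y))) (BarDer y z) z := by
  have hq : QSq (z - y) ≠ 0 := (QSq_pos (sub_ne_zero.2 hz)).ne'
  have h := (Real.hasDerivAt_log hq).comp_hasFDerivAt z (hasFDerivAt_QSq_sub y z)
  simpa [BarDer, Function.comp_def] using h

lemma hasFDerivAt_inv_QSq (y z : ℂ) (hz : z ≠ y) :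
    HasFDerivAt (fun w => (QSq (w - y))⁻¹)
      (-((QSq (z - y)) ^ 2)⁻¹ • NS (z - y)) z := by
  have hq : QSq (z - y) ≠ 0 := (QSq_pos (sub_ne_zero.2 hz)).ne'
  have h := (hasDerivAt_inv hq).comp_hasFDerivAt z (hasFDerivAt_QSq_sub y z)
  exact h

lemma hasFDerivAt_BarDer_one (y z : ℂ) (hz : z ≠ y) :
    ∃ L : ℂ →L[ℝ] ℝ, HasFDerivAt (fun w => BarDer y w 1) L z ∧
      L 1 = (QSq (z - y))⁻¹ * 2 - ((QSq (z - y)) ^ 2)⁻¹ * (2 * (z - y).re) ^ 2 := by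
  have hre : HasFDerivAt (fun w : ℂ => 2 * (w - y).re) ((2 : ℝ) • Complex.reCLM) z := by
    have h := ((Complex.reCLM.hasFDerivAt (x := z - y)).comp z
      ((hasFDerivAt_id z).sub_const y)).const_mul 2
    simpa [Function.comp] using h
  have hmul := (hasFDerivAt_inv_QSq y z hz).mul hre
  have hfn : (fun w => BarDer y w 1) = fun w => (QSq (w - y))⁻¹ * (2 * (w - y).re) := by
    funext w; simp [GL_apply]
  refine ⟨_, by rw [hfn]; exact hmul, ?_⟩
  simp [NS_apply]
  ring

lemma hasFDerivAt_BarDer_I (y z : ℂ) (hz : z ≠ y) :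
    ∃ L : ℂ →L[ℝ] ℝ, HasFDerivAt (fun w => BarDer y w Complex.I) L z ∧
      L Complex.I = (QSq (z - y))⁻¹ * 2 - ((QSq (z - y)) ^ 2)⁻¹ * (2 * (z - y).im) ^ 2 := by
  have him : HasFDerivAt (fun w : ℂ => 2 * (w - y).im) ((2 : ℝ) • Complex.imCLM) z := by
    have h := ((Complex.imCLM.hasFDerivAt (x := z - y)).comp z
      ((hasFDerivAt_id z).sub_const y)).const_mul 2
    simpa [Function.comp] using h
  have hmul := (hasFDerivAt_inv_QSq y z hz).mul him
  have hfn : (fun w => BarDer y w Complex.I) = fun w => (QSq (w - y))⁻¹ * (2 * (w - y).im) := by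
    funext w; simp [GL_apply]
  refine ⟨_, by rw [hfn]; exact hmul, ?_⟩
  simp [NS_apply]
  ring

/-- Second derivative test: at an interior maximum of a differentiable function whose
directional derivative function is differentiable, each pure second directional
derivative is nonpositive. -/
lemma second_deriv_test {V : Set ℂ} (hV : IsOpen V) {p : ℂ} (hp : p ∈ V)
    {f : ℂ → ℝ} {f' : ℂ → ℂ →L[ℝ] ℝ} (hd : ∀ w ∈ V, HasFDerivAt f (f' w) w)
    (hmax : IsMaxOn f V p) (v : ℂ) {L : ℂ →L[ℝ] ℝ}
    (hL : HasFDerivAt (fun w => f' w v) L p) : L v ≤ 0 := by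
  by_contra hcon
  push_neg at hcon
  have hloc : IsLocalMax f p := hmax.isLocalMax (hV.mem_nhds hp)
  have hf'p : f' p = 0 := hloc.hasFDerivAt_eq_zero (hd p hp)
  set c : ℝ → ℂ := fun t => p + t • v with hc
  have hc0 : c 0 = p := by simp [hc]
  have hcd : ∀ t : ℝ, HasDerivAt c v t := fun t => by
    rw [hc]; simpa only [id_eq, one_smul] using (((hasDerivAt_id t).smul_const v).const_add p)
  have hcc : Continuous c := by
    rw [hc]; fun_prop
  have hgd : ∀ t : ℝ, c t ∈ V → HasDerivAt (fun s => f (c s)) (f' (c t) v) t := by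
    intro t ht
    simpa [Function.comp_def] using (hd (c t) ht).comp_hasDerivAt t (hcd t)
  have hg'd : HasDerivAt (fun t => f' (c t) v) (L v) 0 := by
    have hL' : HasFDerivAt (fun w => f' w v) L (c 0) := by rw [hc0]; exact hL
    have h := hL'.comp_hasDerivAt 0 (hcd 0)
    simpa [Function.comp_def, hc0] using h
  have hg'0 : f' (c 0) v = 0 := by rw [hc0, hf'p]; simp
  have hslope := hasDerivAt_iff_tendsto_slope.1 hg'd
  have hev : ∀ᶠ t in nhdsWithin (0 : ℝ) (Set.Ioi 0), 0 < f' (c t) v := by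
    have h1 : ∀ᶠ t in nhdsWithin (0 : ℝ) {0}ᶜ,
        0 < slope (fun t => f' (c t) v) 0 t := hslope.eventually (eventually_gt_nhds hcon)
    have h2 : nhdsWithin (0 : ℝ) (Set.Ioi 0) ≤ nhdsWithin (0 : ℝ) {0}ᶜ :=
      nhdsWithin_mono 0 (fun t ht => ne_of_gt ht)
    filter_upwards [h1.filter_mono h2, self_mem_nhdsWithin] with t h3 h4
    have h5 : (0 : ℝ) < t := h4
    rw [slope_def_field, hg'0, sub_zero, sub_zero] at h3
    have h6 := mul_pos h3 h5
    rwa [div_mul_cancel₀ _ (ne_of_gt h5)] at h6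
  have hA : ∀ᶠ t in nhds (0 : ℝ), c t ∈ V ∧ f (c t) ≤ f p := by
    have hVt : ∀ᶠ t in nhds (0 : ℝ), c t ∈ V := by
      have : V ∈ nhds (c 0) := by rw [hc0]; exact hV.mem_nhds hp
      exact (hcc.tendsto 0).eventually_mem this
    have hmt : ∀ᶠ t in nhds (0 : ℝ), f (c t) ≤ f p := by
      have hl : ∀ᶠ w in nhds p, f w ≤ f p := hloc
      have : ∀ᶠ w in nhds (c 0), f w ≤ f p := by rwa [hc0]
      exact (hcc.tendsto 0).eventually this
    exact hVt.and hmt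
  obtain ⟨r, hr, hball⟩ := Metric.eventually_nhds_iff.1 hA
  obtain ⟨u, hu, hIoc⟩ := mem_nhdsGT_iff_exists_Ioc_subset.1 hev
  set t₀ := min (r / 2) u with ht₀
  have ht₀pos : 0 < t₀ := lt_min (by linarith) hu
  have hsub : Set.Icc (0 : ℝ) t₀ ⊆ {t | c t ∈ V ∧ f (c t) ≤ f p} := by
    intro t ht
    apply hball
    have h1 : |t| ≤ t₀ := by
      rw [abs_le]; exact ⟨by linarith [ht.1, ht₀pos], ht.2⟩
    have : dist t 0 = |t| := by simp [Real.dist_eq]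
    rw [this]
    exact lt_of_le_of_lt h1 (lt_of_le_of_lt (min_le_left _ _) (by linarith))
  have hmono : StrictMonoOn (fun t => f (c t)) (Set.Icc 0 t₀) := by
    apply strictMonoOn_of_deriv_pos (convex_Icc _ _)
    · exact fun t ht => ((hgd t (hsub ht).1).continuousAt).continuousWithinAt
    · intro t ht
      rw [interior_Icc] at ht
      rw [(hgd t (hsub ⟨ht.1.le, ht.2.le⟩).1).deriv]
      exact hIoc ⟨ht.1, le_trans ht.2.le (min_le_right _ _)⟩
  have h1 : f (c 0) < f (c t₀) :=
    hmono (Set.left_mem_Icc.2 ht₀pos.le) (Set.right_mem_Icc.2 ht₀pos.le) ht₀pos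
  have h2 : f (c t₀) ≤ f p := (hsub (Set.right_mem_Icc.2 ht₀pos.le)).2
  rw [hc0] at h1
  linarith

end LindelofAux

set_option maxHeartbeats 2000000 in
theorem key_half (V : Set ℂ) (hV : IsOpen V) (hVb : Bornology.IsBounded V)
    (h : ℂ → ℝ) (hh : HarmonicOnD h V) (hbd : ∃ M, ∀ z ∈ V, |h z| ≤ M)
    (C : ℝ) (E : Finset ℂ) (hE : ↑E ⊆ frontier V)
    (hlim : ∀ y ∈ frontier V \ (E : Set ℂ),
      Filter.limsup (fun z => |h z|) (nhdsWithin y V) ≤ C) :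
    ∀ z ∈ V, h z ≤ C := by
  obtain ⟨M, hM⟩ := hbd
  obtain ⟨r₀, hr₀⟩ := hVb.subset_closedBall 0
  obtain ⟨R, hRdef⟩ : ∃ R : ℝ, R = 2 * max r₀ 0 + 1 := ⟨_, rfl⟩
  have hR1 : (1:ℝ) ≤ R := by rw [hRdef]; nlinarith [le_max_right r₀ (0:ℝ)]
  have hlogR : 0 ≤ Real.log R := Real.log_nonneg hR1
  have hnormV : ∀ z ∈ closure V, ‖z‖ ≤ max r₀ 0 := by
    intro z hz
    have h1 : closure V ⊆ Metric.closedBall 0 r₀ :=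
      closure_minimal hr₀ Metric.isClosed_closedBall
    have h2 := h1 hz
    rw [Metric.mem_closedBall, dist_zero_right] at h2
    exact le_trans h2 (le_max_left _ _)
  have hQzy : ∀ z ∈ V, ∀ y ∈ E, QSq (z - y) ≤ R ^ 2 := by
    intro z hz y hy
    have h2 := hnormV z (subset_closure hz)
    have h3 := hnormV y (frontier_subset_closure (hE hy))
    have h1 : ‖z - y‖ ≤ R := by
      calc ‖z - y‖ ≤ ‖z‖ + ‖y‖ := norm_sub_le _ _
        _ ≤ R := by rw [hRdef]; linarith
    rw [QSq_eq_norm]; exact pow_le_pow_left₀ (norm_nonneg _) h1 2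
  have hQz : ∀ z ∈ V, QSq z ≤ R ^ 2 := by
    intro z hz; rw [QSq_eq_norm]
    refine pow_le_pow_left₀ (norm_nonneg _) ?_ 2
    have := hnormV z (subset_closure hz); rw [hRdef]; linarith
  have hzney : ∀ z ∈ V, ∀ y ∈ E, z ≠ y := by
    intro z hz y hy hzy
    have h1 : y ∉ V := by
      have h2 := hE hy; rw [hV.frontier_eq] at h2; exact h2.2
    exact h1 (hzy ▸ hz)
  have hQpos : ∀ z ∈ V, ∀ y ∈ E, 0 < QSq (z - y) := fun z hz y hy =>
    QSq_pos (sub_ne_zero.2 (hzney z hz y hy))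
  have hlogb : ∀ z ∈ V, ∀ y ∈ E, Real.log (QSq (z - y)) ≤ 2 * Real.log R := by
    intro z hz y hy
    have h1 := Real.log_le_log (hQpos z hz y hy) (hQzy z hz y hy)
    rwa [show Real.log (R^2) = 2 * Real.log R by
      rw [Real.log_pow]; push_cast; ring] at h1
  obtain ⟨n, hn⟩ : ∃ n : ℝ, n = (E.card : ℝ) := ⟨_, rfl⟩
  have hn0 : 0 ≤ n := by rw [hn]; exact Nat.cast_nonneg _
  have main : ∀ ε : ℝ, 0 < ε → ∀ z ∈ V,
      h z ≤ C + ε + ε * ∑ y ∈ E, (Real.log R - (1/2) * Real.log (QSq (z - y))) := by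
    intro ε hε
    obtain ⟨δ, hδdef⟩ : ∃ δ : ℝ, δ = ε / (4 * (R^2 + 1)) := ⟨_, rfl⟩
    have hδ : 0 < δ := by rw [hδdef]; positivity
    obtain ⟨ψ, hψdef⟩ : ∃ ψ : ℂ → ℝ, ψ = fun z => ∑ y ∈ E, Real.log (QSq (z - y)) := ⟨_, rfl⟩
    obtain ⟨φ, hφdef⟩ : ∃ φ : ℂ → ℝ,
      φ = fun z => h z + (ε/2) * ψ z + δ * QSq z - ε * n * Real.log R := ⟨_, rfl⟩
    have hδQ : ∀ z ∈ V, δ * QSq z ≤ ε/4 := by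
      intro z hz
      have h1 : δ * QSq z ≤ δ * R^2 := mul_le_mul_of_nonneg_left (hQz z hz) hδ.le
      have h2 : δ * R^2 ≤ ε/4 := by
        rw [hδdef, div_mul_eq_mul_div, div_le_div_iff₀ (by positivity) (by norm_num)]
        nlinarith
      exact le_trans h1 h2
    have hψub : ∀ z ∈ V, ψ z ≤ n * (2 * Real.log R) := by
      intro z hz
      have h1 := Finset.sum_le_card_nsmul E (fun y => Real.log (QSq (z - y)))
        (2 * Real.log R) (fun y hy => hlogb z hz y hy)
      rw [nsmul_eq_mul] at h1
      rw [hψdef, hn]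
      exact h1
    have hmain2 : ∀ z ∈ V, φ z < C + ε := by
      by_contra hcon
      push_neg at hcon
      obtain ⟨z₀, hz₀V, hz₀⟩ := hcon
      set K : Set ℂ := {z | z ∈ V ∧ C + ε ≤ φ z} with hK
      have hKsub : K ⊆ V := fun z hz => hz.1
      have hhd : DifferentiableOn ℝ h V := hh.1.differentiableOn (by norm_num)
      have hψd : ∀ w ∈ V, HasFDerivAt ψ (∑ y ∈ E, BarDer y w) w := by
        intro w hw
        rw [hψdef]
        exact HasFDerivAt.fun_sum (fun y hy => hasFDerivAt_logQ y w (hzney w hw y hy))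
      have hφd : ∀ w ∈ V, HasFDerivAt φ
          ((fderiv ℝ h w + (ε/2) • ∑ y ∈ E, BarDer y w) + δ • NS w) w := by
        intro w hw
        have h1 : HasFDerivAt h (fderiv ℝ h w) w :=
          (hhd.differentiableAt (hV.mem_nhds hw)).hasFDerivAt
        rw [hφdef]
        exact ((h1.add ((hψd w hw).const_mul (ε/2))).add
          ((hasFDerivAt_QSq w).const_mul δ)).sub_const (ε * n * Real.log R)
      have hφc : ∀ w ∈ V, ContinuousAt φ w := fun w hw => (hφd w hw).continuousAt
      have hεn : 0 ≤ ε * n * Real.log R :=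
        mul_nonneg (mul_nonneg hε.le hn0) hlogR
      have hfront : ∀ p ∈ frontier V, ∀ᶠ z in nhdsWithin p V, φ z < C + ε := by
        intro p hpf
        have hhalf : (0:ℝ) < ε/2 := by linarith
        by_cases hpE : p ∈ E
        · have hbound : ∀ z ∈ V, φ z ≤ (M + ε * n * Real.log R + ε/4)
              + (ε/2) * Real.log (QSq (z - p)) := by
            intro z hz
            have h1 : ψ z ≤ Real.log (QSq (z - p)) + n * (2 * Real.log R) := by
              have e1 : ψ z = Real.log (QSq (z - p)) +
                  ∑ y ∈ E.erase p, Real.log (QSq (z - y)) := by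
                simp only [hψdef]
                exact (Finset.add_sum_erase E _ hpE).symm
              rw [e1]
              have h2 : ∑ y ∈ E.erase p, Real.log (QSq (z - y)) ≤
                  (E.erase p).card • (2 * Real.log R) :=
                Finset.sum_le_card_nsmul _ _ _ (fun y hy =>
                  hlogb z hz y (Finset.mem_of_mem_erase hy))
              rw [nsmul_eq_mul] at h2
              have h3 : ((E.erase p).card : ℝ) * (2 * Real.log R) ≤ n * (2 * Real.log R) := by
                apply mul_le_mul_of_nonneg_right _ (by linarith)
                rw [hn]
                exact_mod_cast Nat.cast_le.2 (Finset.card_le_card (Finset.erase_subset _ _))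
              linarith
            have h5 := abs_le.1 (hM z hz)
            have h6 := hδQ z hz
            have hφz : φ z = h z + (ε/2) * ψ z + δ * QSq z - ε * n * Real.log R := by
              rw [hφdef]
            have h7 := mul_le_mul_of_nonneg_left h1 hhalf.le
            rw [hφz]
            nlinarith
          have htend : Filter.Tendsto (fun z => Real.log (QSq (z - p)))
              (nhdsWithin p V) Filter.atBot := by
            apply Real.tendsto_log_nhdsGT_zero.comp
            rw [tendsto_nhdsWithin_iff]
            constructor
            · have hcQ : Continuous fun z : ℂ => QSq (z - p) := by
                simp only [QSq]
                fun_prop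
              have h7 := (hcQ.tendsto p).mono_left (nhdsWithin_le_nhds (s := V))
              simpa [QSq] using h7
            · filter_upwards [self_mem_nhdsWithin] with z hz
              exact hQpos z hz p hpE
          have hev := htend.eventually (Filter.eventually_lt_atBot
            (((C + ε) - (M + ε * n * Real.log R + ε/4)) / (ε/2)))
          filter_upwards [hev, self_mem_nhdsWithin] with z hlt hzV
          have h8 := hbound z hzV
          have h10 := mul_lt_mul_of_pos_left hlt hhalf
          have h11 : (ε/2) * (((C + ε) - (M + ε * n * Real.log R + ε/4)) / (ε/2))
              = (C + ε) - (M + ε * n * Real.log R + ε/4) := by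
            field_simp
          rw [h11] at h10
          linarith only [h8, h10]
        · have hp' : p ∈ frontier V \ (E : Set ℂ) := ⟨hpf, hpE⟩
          have hb : Filter.IsBoundedUnder (· ≤ ·) (nhdsWithin p V) (fun z => |h z|) := by
            refine ⟨M, ?_⟩
            rw [Filter.eventually_map]
            filter_upwards [self_mem_nhdsWithin] with z hz using hM z hz
          have hev := Filter.eventually_lt_of_limsup_lt
            (lt_of_le_of_lt (hlim p hp') (by linarith : C < C + ε/4)) hb
          filter_upwards [hev, self_mem_nhdsWithin] with z hz1 hzV
          have h1 : h z ≤ |h z| := le_abs_self _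
          have h2 := mul_le_mul_of_nonneg_left (hψub z hzV) hhalf.le
          have h3 := hδQ z hzV
          have hφz : φ z = h z + (ε/2) * ψ z + δ * QSq z - ε * n * Real.log R := by
            rw [hφdef]
          rw [hφz]
          nlinarith
      have hKcl : closure K ⊆ K := by
        intro q hq
        have hqV' : q ∈ closure V := closure_mono hKsub hq
        have hne : (nhdsWithin q K).NeBot := mem_closure_iff_nhdsWithin_neBot.1 hq
        by_cases hqV : q ∈ V
        · refine ⟨hqV, ?_⟩
          refine ge_of_tendsto (x := nhdsWithin q K)
            (((hφc q hqV).tendsto).mono_left nhdsWithin_le_nhds) ?_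
          filter_upwards [self_mem_nhdsWithin] with w hw using hw.2
        · have hqf : q ∈ frontier V := by rw [hV.frontier_eq]; exact ⟨hqV', hqV⟩
          have h1 : ∀ᶠ w in nhdsWithin q K, φ w < C + ε :=
            (hfront q hqf).filter_mono (nhdsWithin_mono q hKsub)
          have h2 : ∀ᶠ w in nhdsWithin q K, C + ε ≤ φ w := by
            filter_upwards [self_mem_nhdsWithin] with w hw using hw.2
          obtain ⟨w, hw1, hw2⟩ := (h1.and h2).exists
          linarith
      have hKc : IsCompact K := Metric.isCompact_of_isClosed_isBounded
        (isClosed_of_closure_subset hKcl) (hVb.subset hKsub)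
      obtain ⟨zs, hzsK, hzsmax⟩ := hKc.exists_isMaxOn ⟨z₀, hz₀V, hz₀⟩
        (fun w hw => (hφc w (hKsub hw)).continuousWithinAt)
      have hzsV : zs ∈ V := hKsub hzsK
      have hmax : IsMaxOn φ V zs := by
        intro w hw
        by_cases hwK : C + ε ≤ φ w
        · exact hzsmax ⟨hw, hwK⟩
        · push_neg at hwK
          show φ w ≤ φ zs
          exact le_trans hwK.le hzsK.2
      -- second derivative contradiction at the interior maximum
      have hDd : DifferentiableOn ℝ (fderiv ℝ h) V :=
        (hh.1.fderiv_of_isOpen hV (m := 1) (by norm_num)).differentiableOn (by norm_num)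
      have hD : HasFDerivAt (fderiv ℝ h) (fderiv ℝ (fderiv ℝ h) zs) zs :=
        (hDd.differentiableAt (hV.mem_nhds hzsV)).hasFDerivAt
      have hhv : ∀ v : ℂ, HasFDerivAt (fun w => fderiv ℝ h w v)
          ((ContinuousLinearMap.apply ℝ ℝ v).comp (fderiv ℝ (fderiv ℝ h) zs)) zs := by
        intro v
        have h1 := ((ContinuousLinearMap.apply ℝ ℝ v).hasFDerivAt).comp zs hD
        simpa [Function.comp_def] using h1
      choose! L1 hL1 hL1v using fun y (hy : y ∈ E) =>
        hasFDerivAt_BarDer_one y zs (hzney zs hzsV y hy)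
      choose! LI hLI hLIv using fun y (hy : y ∈ E) =>
        hasFDerivAt_BarDer_I y zs (hzney zs hzsV y hy)
      have hNS1 : HasFDerivAt (fun w : ℂ => NS w 1) ((2:ℝ) • Complex.reCLM) zs := by
        have e : (fun w : ℂ => NS w 1) = fun w : ℂ => 2 * Complex.reCLM w := by
          funext w; simp [NS_apply]
        rw [e]; exact (Complex.reCLM.hasFDerivAt).const_mul 2
      have hNSI : HasFDerivAt (fun w : ℂ => NS w Complex.I) ((2:ℝ) • Complex.imCLM) zs := by
        have e : (fun w : ℂ => NS w Complex.I) = fun w : ℂ => 2 * Complex.imCLM w := by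
          funext w; simp [NS_apply]
        rw [e]; exact (Complex.imCLM.hasFDerivAt).const_mul 2
      have hfun1 : (fun w => ((fderiv ℝ h w + (ε/2) • ∑ y ∈ E, BarDer y w) + δ • NS w) 1)
          = fun w => (fderiv ℝ h w 1 + (ε/2) * ∑ y ∈ E, BarDer y w 1) + δ * NS w 1 := by
        funext w
        simp [ContinuousLinearMap.sum_apply]
      have hfunI : (fun w => ((fderiv ℝ h w + (ε/2) • ∑ y ∈ E, BarDer y w) + δ • NS w) Complex.I)
          = fun w => (fderiv ℝ h w Complex.I + (ε/2) * ∑ y ∈ E, BarDer y w Complex.I)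
            + δ * NS w Complex.I := by
        funext w
        simp [ContinuousLinearMap.sum_apply]
      have hT1 : HasFDerivAt
          (fun w => ((fderiv ℝ h w + (ε/2) • ∑ y ∈ E, BarDer y w) + δ • NS w) 1)
          (((ContinuousLinearMap.apply ℝ ℝ 1).comp (fderiv ℝ (fderiv ℝ h) zs)
            + (ε/2) • ∑ y ∈ E, L1 y) + δ • ((2:ℝ) • Complex.reCLM)) zs := by
        rw [hfun1]
        exact ((hhv 1).add ((HasFDerivAt.fun_sum (fun y hy => hL1 y hy)).const_mul (ε/2))).add
          (hNS1.const_mul δ)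
      have hTI : HasFDerivAt
          (fun w => ((fderiv ℝ h w + (ε/2) • ∑ y ∈ E, BarDer y w) + δ • NS w) Complex.I)
          (((ContinuousLinearMap.apply ℝ ℝ Complex.I).comp (fderiv ℝ (fderiv ℝ h) zs)
            + (ε/2) • ∑ y ∈ E, LI y) + δ • ((2:ℝ) • Complex.imCLM)) zs := by
        rw [hfunI]
        exact ((hhv Complex.I).add
          ((HasFDerivAt.fun_sum (fun y hy => hLI y hy)).const_mul (ε/2))).add
          (hNSI.const_mul δ)
      have e1 := second_deriv_test hV hzsV hφd hmax 1 hT1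
      have e2 := second_deriv_test hV hzsV hφd hmax Complex.I hTI
      have harm := hh.2 zs hzsV
      rw [(hhv 1).fderiv, (hhv Complex.I).fderiv] at harm
      simp only [ContinuousLinearMap.comp_apply, ContinuousLinearMap.apply_apply] at harm
      have hval1 : (((ContinuousLinearMap.apply ℝ ℝ 1).comp (fderiv ℝ (fderiv ℝ h) zs)
            + (ε/2) • ∑ y ∈ E, L1 y) + δ • ((2:ℝ) • Complex.reCLM)) 1
          = fderiv ℝ (fderiv ℝ h) zs 1 1 + (ε/2) * ∑ y ∈ E, L1 y 1 + δ * 2 := by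
        simp only [ContinuousLinearMap.add_apply, ContinuousLinearMap.comp_apply,
          ContinuousLinearMap.apply_apply, ContinuousLinearMap.smul_apply,
          ContinuousLinearMap.sum_apply, smul_eq_mul, Complex.reCLM_apply, Complex.one_re]
        ring
      have hvalI : (((ContinuousLinearMap.apply ℝ ℝ Complex.I).comp (fderiv ℝ (fderiv ℝ h) zs)
            + (ε/2) • ∑ y ∈ E, LI y) + δ • ((2:ℝ) • Complex.imCLM)) Complex.I
          = fderiv ℝ (fderiv ℝ h) zs Complex.I Complex.I
            + (ε/2) * ∑ y ∈ E, LI y Complex.I + δ * 2 := by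
        simp only [ContinuousLinearMap.add_apply, ContinuousLinearMap.comp_apply,
          ContinuousLinearMap.apply_apply, ContinuousLinearMap.smul_apply,
          ContinuousLinearMap.sum_apply, smul_eq_mul, Complex.imCLM_apply, Complex.I_im]
        ring
      have hlogsum : ∀ y ∈ E, L1 y 1 + LI y Complex.I = 0 := by
        intro y hy
        have hq := hQpos zs hzsV y hy
        rw [hL1v y hy, hLIv y hy]
        obtain ⟨a, ha⟩ : ∃ a : ℝ, a = (zs - y).re := ⟨_, rfl⟩
        obtain ⟨b, hb⟩ : ∃ b : ℝ, b = (zs - y).im := ⟨_, rfl⟩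
        have hx : QSq (zs - y) = a * a + b * b := by rw [ha, hb]; rfl
        rw [← ha, ← hb, hx]
        have hq' : a * a + b * b ≠ 0 := by rw [← hx]; exact hq.ne'
        field_simp
        ring
      have hsum0 : (ε/2) * ∑ y ∈ E, L1 y 1 + (ε/2) * ∑ y ∈ E, LI y Complex.I = 0 := by
        rw [← mul_add, ← Finset.sum_add_distrib, Finset.sum_eq_zero hlogsum, mul_zero]
      rw [hval1] at e1
      rw [hvalI] at e2
      linarith
    intro z hz
    have h1 := hmain2 z hz
    have hφz : φ z = h z + (ε/2) * ψ z + δ * QSq z - ε * n * Real.log R := by rw [hφdef]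
    have hψz : ψ z = ∑ y ∈ E, Real.log (QSq (z - y)) := by rw [hψdef]
    have h2 : ε * ∑ y ∈ E, (Real.log R - (1/2) * Real.log (QSq (z - y)))
        = ε * n * Real.log R - (ε/2) * ψ z := by
      rw [hψz, Finset.sum_sub_distrib, Finset.sum_const, nsmul_eq_mul, ← Finset.mul_sum]
      rw [hn]
      ring
    have h3 : 0 ≤ δ * QSq z := mul_nonneg hδ.le (QSq_nonneg z)
    rw [hφz] at h1
    linarith
  intro z hz
  set B := ∑ y ∈ E, (Real.log R - (1/2) * Real.log (QSq (z - y))) with hB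
  have hB0 : 0 ≤ B := by
    apply Finset.sum_nonneg
    intro y hy
    have := hlogb z hz y hy
    linarith
  refine le_of_forall_pos_le_add fun ε' hε' => ?_
  have hden : 0 < 1 + B := by linarith
  have h1 := main (ε' / (2 * (1 + B))) (by positivity) z hz
  rw [← hB] at h1
  have h2 : ε' / (2 * (1 + B)) + ε' / (2 * (1 + B)) * B ≤ ε' := by
    have h3 : ε' / (2 * (1 + B)) * (1 + B) = ε' / 2 := by field_simp
    nlinarith
  linarith

/-- Lindelöf-type maximum principle: a bounded harmonic function on a bounded open planar
set whose boundary limsup of the absolute value is at most `C` off finitely many boundary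
points is bounded by `C` everywhere. -/
theorem stmt_5 (V : Set ℂ) (hV : IsOpen V) (hVb : Bornology.IsBounded V)
    (h : ℂ → ℝ) (hh : HarmonicOnD h V) (hbd : ∃ M, ∀ z ∈ V, |h z| ≤ M)
    (C : ℝ) (hC : 0 ≤ C) (E : Finset ℂ) (hE : ↑E ⊆ frontier V)
    (hlim : ∀ y ∈ frontier V \ (E : Set ℂ),
      Filter.limsup (fun z => |h z|) (nhdsWithin y V) ≤ C) :
    ∀ z ∈ V, |h z| ≤ C := by
  intro z hz
  obtain ⟨M, hM⟩ := hbd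
  have hpos := key_half V hV hVb h hh ⟨M, hM⟩ C E hE hlim z hz
  have hhneg : HarmonicOnD (fun z => -h z) V := by
    refine ⟨hh.1.neg, ?_⟩
    intro w hw
    have h1 : (fun w => fderiv ℝ (fun x => -h x) w 1) = fun w => -(fderiv ℝ h w 1) := by
      funext w; rw [fderiv_fun_neg]; simp
    have hI : (fun w => fderiv ℝ (fun x => -h x) w Complex.I) =
        fun w => -(fderiv ℝ h w Complex.I) := by
      funext w; rw [fderiv_fun_neg]; simp
    rw [h1, hI]
    have e1 : (fun w => -(fderiv ℝ h w 1)) = fun w => -((fun w => fderiv ℝ h w 1) w) := rfl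
    have e2 : (fun w => -(fderiv ℝ h w Complex.I)) =
        fun w => -((fun w => fderiv ℝ h w Complex.I) w) := rfl
    rw [e1, e2, fderiv_fun_neg, fderiv_fun_neg]
    have := hh.2 w hw
    simp only [ContinuousLinearMap.neg_apply]
    linarith
  have habs : (fun z => |(fun z => -h z) z|) = fun z => |h z| := by
    funext z; simp
  have hneg := key_half V hV hVb (fun z => -h z) hhneg ⟨M, fun z hz => by simpa using hM z hz⟩
    C E hE (by rw [habs]; exact hlim) z hz
  rw [abs_le]
  exact ⟨by linarith [show -h z ≤ C from hneg], hpos⟩
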